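/- Let α ∈ (0,∞), δ ∈ (-1,∞) and σ ∈ [0,α]. Then sup_{x ∈ (0,∞)} x^σ |N(α,δ,x) − ∑_{k=0}^{n-1} ((-δ)_k / k!) γ(α+k,x)/x^{α+k}| → 0 as n → ∞; i.e., the partial sums of the incomplete-Gamma expansion converge to N(α,δ,·) uniformly in the weighted sup norm ‖f‖_σ := sup_{x ∈ (0,∞)} x^σ |f(x)|. -/

import Mathlib

open MeasureTheory Real Filter

/-- The Pochhammer symbol `(a)_k = a (a+1) ⋯ (a+k-1)`, with `(a)_0 = 1`. -/
noncomputable def poch (a : ℝ) : ℕ → ℝ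
  | 0 => 1
  | k + 1 => poch a k * (a + k)

/-- The lower incomplete Gamma function `γ(ν,x) = ∫₀ˣ s^(ν-1) e^(-s) ds`. -/
noncomputable def lincGamma (ν x : ℝ) : ℝ := ∫ s in (0:ℝ)..x, s ^ (ν - 1) * Real.exp (-s)

/-- The reparametrized Kummer function `N(α,δ,x) = ∫₀¹ t^(α-1) (1-t)^δ e^(-xt) dt`. -/
noncomputable def NKummer (α δ x : ℝ) : ℝ :=
  ∫ t in (0:ℝ)..1, t ^ (α - 1) * (1 - t) ^ δ * Real.exp (-(x * t))


namespace KummerAux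

noncomputable def cc (δ : ℝ) (k : ℕ) : ℝ := poch (-δ) k / k.factorial

lemma cc_zero (δ : ℝ) : cc δ 0 = 1 := by simp [cc, poch]

lemma cc_succ (δ : ℝ) (k : ℕ) :
    ((k:ℝ) + 1) * cc δ (k+1) = ((k:ℝ) - δ) * cc δ k := by
  have hk : (k.factorial : ℝ) ≠ 0 := Nat.cast_ne_zero.mpr k.factorial_ne_zero
  have hfac : ((k+1).factorial : ℝ) = ((k:ℝ)+1) * k.factorial := by
    rw [Nat.factorial_succ]; push_cast; ring
  have hpoch : poch (-δ) (k+1) = poch (-δ) k * (-δ + k) := rfl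
  rw [cc, cc, hpoch, hfac]
  have hk1 : ((k:ℝ)+1) ≠ 0 := by positivity
  field_simp
  ring

noncomputable def PP (δ : ℝ) (n : ℕ) (t : ℝ) : ℝ := ∑ k ∈ Finset.range n, cc δ k * t^k

noncomputable def RR (δ : ℝ) (n : ℕ) (t : ℝ) : ℝ := (1-t)^δ - PP δ n t

lemma key_ident (δ : ℝ) (n : ℕ) (t : ℝ) :
    (1-t) * (∑ k ∈ Finset.range n, cc δ k * ((k:ℝ) * t^(k-1)))
      + δ * (∑ k ∈ Finset.range n, cc δ k * t^k)
      = -((n:ℝ) * cc δ n * t^(n-1)) := by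
  induction n with
  | zero => simp
  | succ n ih =>
    rw [Finset.sum_range_succ, Finset.sum_range_succ]
    have h1 := cc_succ δ n
    have h2 : (n:ℝ) * t^(n-1) * t = (n:ℝ) * t^n := by
      cases n with
      | zero => simp
      | succ m => rw [Nat.succ_sub_one, pow_succ]; ring
    have h3 : (n+1) - 1 = n := rfl
    rw [h3]
    push_cast
    linear_combination ih - cc δ n * h2 + t^n * h1

end KummerAux

namespace KummerAux

noncomputable def J (δ : ℝ) (n : ℕ) (t : ℝ) : ℝ :=
  ∫ s in (0:ℝ)..t, s^(n-1) * (1-s)^(-δ-1)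

lemma hasDerivAt_Q (δ : ℝ) (n : ℕ) {s : ℝ} (hs : s < 1) :
    HasDerivAt (fun u => 1 - PP δ n u * (1-u)^(-δ))
      ((n:ℝ) * cc δ n * (s^(n-1) * (1-s)^(-δ-1))) s := by
  have h1s : (0:ℝ) < 1 - s := by linarith
  have hP : HasDerivAt (fun u => PP δ n u)
      (∑ k ∈ Finset.range n, cc δ k * ((k:ℝ) * s^(k-1))) s := by
    apply HasDerivAt.fun_sum
    intro k _
    exact (hasDerivAt_pow k s).const_mul (cc δ k)
  have hb : HasDerivAt (fun u : ℝ => 1-u) (-1) s := (hasDerivAt_id s).const_sub 1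
  have hQ : HasDerivAt (fun u : ℝ => (1-u)^(-δ)) (δ * (1-s)^(-δ-1)) s := by
    have h := hb.rpow_const (p := -δ) (Or.inl h1s.ne')
    convert h using 1
    ring
  have hder := (hP.fun_mul hQ).const_sub 1
  refine hder.congr_deriv (Eq.symm ?_)
  have hrw : (1-s)^(-δ) = (1-s)^(-δ-1) * (1-s) := by
    rw [← Real.rpow_add_one h1s.ne']
    ring_nf
  have hki := key_ident δ n s
  rw [hrw]
  unfold PP
  linear_combination ((1-s)^(-δ-1)) * hki

lemma PP_zero (δ : ℝ) {n : ℕ} (hn : 1 ≤ n) : PP δ n 0 = 1 := by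
  unfold PP
  rw [Finset.sum_eq_single_of_mem 0 (Finset.mem_range.mpr hn)]
  · simp [cc_zero]
  · intro b _ hb
    simp [zero_pow hb]

lemma RR_eq (δ : ℝ) {n : ℕ} (hn : 1 ≤ n) {t : ℝ} (ht0 : 0 ≤ t) (ht1 : t < 1) :
    RR δ n t = (n:ℝ) * cc δ n * ((1-t)^δ * J δ n t) := by
  have h1t : (0:ℝ) < 1 - t := by linarith
  have hderiv : ∀ s ∈ Set.uIcc (0:ℝ) t, HasDerivAt (fun u => 1 - PP δ n u * (1-u)^(-δ))
      ((n:ℝ) * cc δ n * (s^(n-1) * (1-s)^(-δ-1))) s := by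
    intro s hs
    rw [Set.uIcc_of_le ht0] at hs
    exact hasDerivAt_Q δ n (lt_of_le_of_lt hs.2 ht1)
  have hint : IntervalIntegrable
      (fun s => (n:ℝ) * cc δ n * (s^(n-1) * (1-s)^(-δ-1))) volume 0 t := by
    apply ContinuousOn.intervalIntegrable
    apply ContinuousOn.mul continuousOn_const
    apply ContinuousOn.mul ((continuous_pow _).continuousOn)
    apply ContinuousOn.rpow_const (continuous_const.sub continuous_id).continuousOn
    intro s hs
    rw [Set.uIcc_of_le ht0] at hs
    exact Or.inl (by simp only [Pi.sub_apply, id_eq]; nlinarith [hs.2, ht1])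
  have hFTC := intervalIntegral.integral_eq_sub_of_hasDerivAt hderiv hint
  rw [intervalIntegral.integral_const_mul] at hFTC
  have hQ0 : 1 - PP δ n 0 * (1-(0:ℝ))^(-δ) = 0 := by
    rw [PP_zero δ hn]; simp
  rw [hQ0, sub_zero] at hFTC
  have hmul : (1-t)^δ * (1-t)^(-δ) = 1 := by
    rw [← Real.rpow_add h1t]; simp
  have : RR δ n t = (1-t)^δ * (1 - PP δ n t * (1-t)^(-δ)) := by
    unfold RR
    rw [mul_sub, mul_one, mul_comm (PP δ n t), ← mul_assoc, hmul, one_mul]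
  rw [this, ← hFTC]
  unfold J
  ring

end KummerAux

namespace KummerAux

lemma hasDerivAt_one_sub_rpow (c : ℝ) {s : ℝ} (hs : s < 1) :
    HasDerivAt (fun u : ℝ => (1-u)^c) (-c * (1-s)^(c-1)) s := by
  have h1s : (0:ℝ) < 1 - s := by linarith
  have hb : HasDerivAt (fun u : ℝ => 1-u) (-1) s := (hasDerivAt_id s).const_sub 1
  have h := hb.rpow_const (p := c) (Or.inl h1s.ne')
  convert h using 1
  ring

lemma cc_succ_div (δ : ℝ) (k : ℕ) :
    cc δ (k+1) = cc δ k * (((k:ℝ) - δ) / ((k:ℝ)+1)) := by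
  have h := cc_succ δ k
  have hk1 : ((k:ℝ)+1) ≠ 0 := by positivity
  field_simp
  linarith [h]

noncomputable def CB (δ : ℝ) : ℝ := (1+|δ|)^(⌈δ⌉₊)

lemma one_le_CB (δ : ℝ) : 1 ≤ CB δ := one_le_pow₀ (by simp)

lemma abs_cc_le_pow (δ : ℝ) (k : ℕ) : |cc δ k| ≤ (1+|δ|)^k := by
  induction k with
  | zero => simp [cc_zero]
  | succ k ih =>
    rw [cc_succ_div, abs_mul]
    have h1 : |((k:ℝ) - δ) / ((k:ℝ)+1)| ≤ 1 + |δ| := by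
      rw [abs_div, abs_of_pos (by positivity : (0:ℝ) < (k:ℝ)+1)]
      rw [div_le_iff₀ (by positivity : (0:ℝ) < (k:ℝ)+1)]
      have : |(k:ℝ) - δ| ≤ k + |δ| := by
        have := abs_add_le (k:ℝ) (-δ)
        simpa [sub_eq_add_neg] using this
      nlinarith [abs_nonneg δ, (Nat.cast_nonneg k : (0:ℝ) ≤ k)]
    calc |cc δ k| * |((k:ℝ) - δ) / ((k:ℝ)+1)| ≤ (1+|δ|)^k * (1+|δ|) := by
          apply mul_le_mul ih h1 (abs_nonneg _) (by positivity)
    _ = (1+|δ|)^(k+1) := by rw [pow_succ]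

lemma abs_cc_le (δ : ℝ) (hδ : -1 < δ) (k : ℕ) : |cc δ k| ≤ CB δ := by
  have step : ∀ m : ℕ, ⌈δ⌉₊ ≤ m → |cc δ m| ≤ CB δ → |cc δ (m+1)| ≤ CB δ := by
    intro m hm ih
    rw [cc_succ_div, abs_mul]
    have hδm : δ ≤ (m:ℝ) := le_trans (Nat.le_ceil δ) (by exact_mod_cast hm)
    have h1 : |((m:ℝ) - δ) / ((m:ℝ)+1)| ≤ 1 := by
      rw [abs_div, abs_of_pos (by positivity : (0:ℝ) < (m:ℝ)+1),
        div_le_one (by positivity), abs_of_nonneg (by linarith)]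
      linarith
    calc |cc δ m| * |((m:ℝ) - δ) / ((m:ℝ)+1)| ≤ CB δ * 1 :=
          mul_le_mul ih h1 (abs_nonneg _) (zero_le_one.trans (one_le_CB δ))
    _ = CB δ := mul_one _
  have base : |cc δ ⌈δ⌉₊| ≤ CB δ := abs_cc_le_pow δ _
  rcases le_or_gt k ⌈δ⌉₊ with h | h
  · exact le_trans (abs_cc_le_pow δ k) (pow_le_pow_right₀ (by simp) h)
  · exact Nat.le_induction base step k h.le

end KummerAux

namespace KummerAux

lemma J_nonneg (δ : ℝ) (n : ℕ) {t : ℝ} (ht0 : 0 ≤ t) (ht1 : t < 1) : 0 ≤ J δ n t := by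
  apply intervalIntegral.integral_nonneg ht0
  intro s hs
  exact mul_nonneg (pow_nonneg hs.1 _) (Real.rpow_nonneg (by linarith [hs.2]) _)

lemma RR_sign (δ : ℝ) {n : ℕ} (hn : 1 ≤ n) {t : ℝ} (ht0 : 0 ≤ t) (ht1 : t < 1)
    {ε : ℝ} (hc : 0 ≤ ε * cc δ n) : 0 ≤ ε * RR δ n t := by
  rw [RR_eq δ hn ht0 ht1]
  have h1 : 0 ≤ (1-t)^δ * J δ n t :=
    mul_nonneg (Real.rpow_nonneg (by linarith) _) (J_nonneg δ n ht0 ht1)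
  calc (0:ℝ) = ((n:ℝ) * ((1-t)^δ * J δ n t)) * 0 := by ring
  _ ≤ ((n:ℝ) * ((1-t)^δ * J δ n t)) * (ε * cc δ n) := by
      apply mul_le_mul_of_nonneg_left hc
      positivity
  _ = ε * ((n:ℝ) * cc δ n * ((1-t)^δ * J δ n t)) := by ring

lemma RR_succ (δ : ℝ) (n : ℕ) (t : ℝ) : RR δ (n+1) t = RR δ n t - cc δ n * t^n := by
  unfold RR PP
  rw [Finset.sum_range_succ]
  ring

noncomputable def N0 (δ : ℝ) : ℕ := ⌈max δ 0⌉₊ + 2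

lemma N0_ge_two (δ : ℝ) : 2 ≤ N0 δ := by unfold N0; omega

lemma delta_le_N0 (δ : ℝ) : δ ≤ (N0 δ : ℝ) := by
  have h1 : δ ≤ max δ 0 := le_max_left _ _
  have h2 : max δ 0 ≤ (⌈max δ 0⌉₊ : ℝ) := Nat.le_ceil _
  unfold N0
  push_cast
  linarith

lemma cc_sign_propagate (δ : ℝ) {ε : ℝ} (hc : 0 ≤ ε * cc δ (N0 δ)) :
    ∀ m : ℕ, 0 ≤ ε * cc δ (N0 δ + m) := by
  intro m
  induction m with
  | zero => simpa using hc
  | succ m ih =>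
    have : N0 δ + (m+1) = (N0 δ + m) + 1 := by omega
    rw [this, cc_succ_div]
    set k := N0 δ + m
    have hk : δ ≤ (k:ℝ) := le_trans (delta_le_N0 δ) (by exact_mod_cast Nat.le_add_right _ m)
    have hfrac : 0 ≤ ((k:ℝ) - δ) / ((k:ℝ)+1) := by
      apply div_nonneg (by linarith) (by positivity)
    calc (0:ℝ) ≤ (ε * cc δ k) * (((k:ℝ) - δ) / ((k:ℝ)+1)) := mul_nonneg ih hfrac
    _ = ε * (cc δ k * (((k:ℝ) - δ) / ((k:ℝ)+1))) := by ring

lemma abs_RR_mono (δ : ℝ) {t : ℝ} (ht0 : 0 ≤ t) (ht1 : t < 1) {n : ℕ} (hn : N0 δ ≤ n) :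
    |RR δ n t| ≤ |RR δ (N0 δ) t| := by
  set ε : ℝ := if 0 ≤ cc δ (N0 δ) then 1 else -1 with hε
  have hεcc : 0 ≤ ε * cc δ (N0 δ) := by
    rw [hε]
    split_ifs with h
    · simpa using h
    · simp only [neg_mul, one_mul, neg_nonneg]
      linarith [not_le.mp h]
  have hεone : ε = 1 ∨ ε = -1 := by
    rw [hε]; split_ifs <;> simp
  have hεabs : ∀ x : ℝ, 0 ≤ ε * x → |x| = ε * x := by
    intro x hx
    rcases hεone with h | h <;> rw [h] at hx ⊢
    · rw [one_mul] at hx ⊢; exact abs_of_nonneg hx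
    · rw [neg_mul, one_mul, neg_nonneg] at hx
      rw [abs_of_nonpos hx]; ring
  have hone : 1 ≤ N0 δ := le_trans (by norm_num) (N0_ge_two δ)
  have key : ∀ m : ℕ, 0 ≤ ε * RR δ (N0 δ + m) t ∧
      ε * RR δ (N0 δ + m) t ≤ ε * RR δ (N0 δ) t := by
    intro m
    induction m with
    | zero => exact ⟨RR_sign δ hone ht0 ht1 hεcc, by simp⟩
    | succ m ih =>
      have hstep : N0 δ + (m+1) = (N0 δ + m) + 1 := by omega
      have hccm := cc_sign_propagate δ hεcc m
      have hccm1 := cc_sign_propagate δ hεcc (m+1)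
      constructor
      · rw [hstep]
        exact RR_sign δ (by omega) ht0 ht1 hccm1
      · rw [hstep, RR_succ]
        have htpow : 0 ≤ t ^ (N0 δ + m) := pow_nonneg ht0 _
        have : 0 ≤ (ε * cc δ (N0 δ + m)) * t ^ (N0 δ + m) := mul_nonneg hccm htpow
        calc ε * (RR δ (N0 δ + m) t - cc δ (N0 δ + m) * t ^ (N0 δ + m))
            = ε * RR δ (N0 δ + m) t - (ε * cc δ (N0 δ + m)) * t ^ (N0 δ + m) := by ring
        _ ≤ ε * RR δ (N0 δ + m) t := by linarith
        _ ≤ ε * RR δ (N0 δ) t := ih.2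
  obtain ⟨m, rfl⟩ := Nat.exists_eq_add_of_le hn
  have h1 : |RR δ (N0 δ + m) t| = ε * RR δ (N0 δ + m) t := hεabs _ (key m).1
  have h2 : |RR δ (N0 δ) t| = ε * RR δ (N0 δ) t := hεabs _ (by simpa using (key 0).1)
  rw [h1, h2]
  exact (key m).2

end KummerAux

namespace KummerAux

lemma V_eq (δ : ℝ) {t : ℝ} (ht0 : 0 ≤ t) (ht1 : t < 1) :
    δ * ∫ s in (0:ℝ)..t, (1-s)^(-δ-1) = (1-t)^(-δ) - 1 := by
  have hderiv : ∀ s ∈ Set.uIcc (0:ℝ) t, HasDerivAt (fun u : ℝ => (1-u)^(-δ))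
      (δ * (1-s)^(-δ-1)) s := by
    intro s hs
    rw [Set.uIcc_of_le ht0] at hs
    have := hasDerivAt_one_sub_rpow (-δ) (lt_of_le_of_lt hs.2 ht1)
    convert this using 1
    ring_nf
  have hint : IntervalIntegrable (fun s : ℝ => δ * (1-s)^(-δ-1)) volume 0 t := by
    apply ContinuousOn.intervalIntegrable
    apply ContinuousOn.mul continuousOn_const
    apply ContinuousOn.rpow_const (continuous_const.sub continuous_id).continuousOn
    intro s hs
    rw [Set.uIcc_of_le ht0] at hs
    exact Or.inl (by simp only [Pi.sub_apply, id_eq]; nlinarith [hs.2, ht1])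
  have hFTC := intervalIntegral.integral_eq_sub_of_hasDerivAt hderiv hint
  rw [intervalIntegral.integral_const_mul] at hFTC
  rw [hFTC]
  norm_num

lemma V_nonneg (δ : ℝ) {t : ℝ} (ht0 : 0 ≤ t) (ht1 : t < 1) :
    0 ≤ ∫ s in (0:ℝ)..t, (1-s)^(-δ-1) := by
  apply intervalIntegral.integral_nonneg ht0
  intro s hs
  exact Real.rpow_nonneg (by linarith [hs.2]) _

lemma J_le (δ : ℝ) {n : ℕ} (hn : 1 ≤ n) {t : ℝ} (ht0 : 0 ≤ t) (ht1 : t < 1) :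
    J δ n t ≤ t^(n-1) * ∫ s in (0:ℝ)..t, (1-s)^(-δ-1) := by
  have hcont1 : ContinuousOn (fun s : ℝ => s^(n-1) * (1-s)^(-δ-1)) (Set.uIcc (0:ℝ) t) := by
    apply ContinuousOn.mul (continuous_pow _).continuousOn
    apply ContinuousOn.rpow_const (continuous_const.sub continuous_id).continuousOn
    intro s hs
    rw [Set.uIcc_of_le ht0] at hs
    exact Or.inl (by simp only [Pi.sub_apply, id_eq]; nlinarith [hs.2, ht1])
  have hcont2 : ContinuousOn (fun s : ℝ => t^(n-1) * (1-s)^(-δ-1)) (Set.uIcc (0:ℝ) t) := by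
    apply ContinuousOn.mul continuousOn_const
    apply ContinuousOn.rpow_const (continuous_const.sub continuous_id).continuousOn
    intro s hs
    rw [Set.uIcc_of_le ht0] at hs
    exact Or.inl (by simp only [Pi.sub_apply, id_eq]; nlinarith [hs.2, ht1])
  have hi1 : IntervalIntegrable (fun s : ℝ => s^(n-1) * (1-s)^(-δ-1)) volume 0 t :=
    hcont1.intervalIntegrable
  have hi2 : IntervalIntegrable (fun s : ℝ => t^(n-1) * (1-s)^(-δ-1)) volume 0 t :=
    hcont2.intervalIntegrable
  have h := intervalIntegral.integral_mono_on (μ := volume) ht0 hi1 hi2 ?_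
  · rw [intervalIntegral.integral_const_mul] at h
    exact h
  · intro s hs
    apply mul_le_mul_of_nonneg_right _ (Real.rpow_nonneg (by linarith [hs.2]) _)
    exact pow_le_pow_left₀ hs.1 hs.2 _

end KummerAux

namespace KummerAux

lemma cc_delta_zero {k : ℕ} (hk : 1 ≤ k) : cc 0 k = 0 := by
  induction k with
  | zero => omega
  | succ k ih =>
    rcases Nat.eq_zero_or_pos k with rfl | hk'
    · rw [cc_succ_div, cc_zero]; norm_num
    · rw [cc_succ_div, ih hk', zero_mul]

/-- The dominating constant. -/
noncomputable def Adom (δ : ℝ) : ℝ := (N0 δ : ℝ) * CB δ * |δ|⁻¹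

lemma Adom_nonneg (δ : ℝ) : 0 ≤ Adom δ := by
  unfold Adom
  have := one_le_CB δ
  positivity

lemma RR_dominated (δ : ℝ) (hδ : -1 < δ) {n : ℕ} (hn : N0 δ ≤ n) {t : ℝ}
    (ht0 : 0 < t) (ht1 : t < 1) :
    |RR δ n t| ≤ Adom δ * (t * (1 + (1-t)^δ)) := by
  have h1t : (0:ℝ) < 1 - t := by linarith
  have hN01 : 1 ≤ N0 δ := le_trans (by norm_num) (N0_ge_two δ)
  refine le_trans (abs_RR_mono δ ht0.le ht1 hn) ?_
  by_cases hδ0 : δ = 0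
  · subst hδ0
    have : RR 0 (N0 0) t = 0 := by
      rw [RR_eq 0 hN01 ht0.le ht1, cc_delta_zero hN01]
      ring
    rw [this, abs_zero]
    unfold Adom
    simp only [abs_zero, inv_zero, mul_zero, zero_mul]
    exact le_refl 0
  · set V := ∫ s in (0:ℝ)..t, (1-s)^(-δ-1) with hVdef
    have hV := V_eq δ ht0.le ht1
    have hVnn := V_nonneg δ ht0.le ht1
    have hJ := J_le δ hN01 ht0.le ht1
    have hJnn := J_nonneg δ (N0 δ) ht0.le ht1
    have hrpos : (0:ℝ) < (1-t)^δ := Real.rpow_pos_of_pos h1t δ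
    have habsδ : (0:ℝ) < |δ| := abs_pos.mpr hδ0
    -- (1-t)^δ * V ≤ (1 + (1-t)^δ)/|δ|
    have hprod : (1-t)^δ * V = (1 - (1-t)^δ)/δ := by
      have hmul : (1-t)^δ * (1-t)^(-δ) = 1 := by
        rw [← Real.rpow_add h1t]; simp
      field_simp
      nlinarith [hV]
    have hkey : (1-t)^δ * V ≤ (1 + (1-t)^δ)/|δ| := by
      have h1 : (1-t)^δ * V ≤ |(1 - (1-t)^δ)/δ| := by
        rw [← hprod]
        exact le_abs_self _
      refine le_trans h1 ?_
      rw [abs_div]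
      gcongr
      exact abs_le.mpr ⟨by nlinarith [hrpos.le], by nlinarith [hrpos.le]⟩
    -- t^(N0-1) ≤ t
    have hpow : t^(N0 δ - 1) ≤ t := by
      have h2 : 1 ≤ N0 δ - 1 := by have := N0_ge_two δ; omega
      calc t^(N0 δ - 1) ≤ t^1 := pow_le_pow_of_le_one ht0.le ht1.le h2
      _ = t := pow_one t
    have habs : |(N0 δ:ℝ) * cc δ (N0 δ) * ((1-t)^δ * J δ (N0 δ) t)|
        = (N0 δ:ℝ) * |cc δ (N0 δ)| * ((1-t)^δ * J δ (N0 δ) t) := by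
      rw [abs_mul, abs_mul, abs_mul, abs_of_nonneg hrpos.le, abs_of_nonneg hJnn,
        abs_of_nonneg (Nat.cast_nonneg (N0 δ) : (0:ℝ) ≤ (N0 δ:ℝ))]
    rw [RR_eq δ hN01 ht0.le ht1, habs]
    have hccb := abs_cc_le δ hδ (N0 δ)
    calc (N0 δ : ℝ) * |cc δ (N0 δ)| * ((1-t)^δ * J δ (N0 δ) t)
        ≤ (N0 δ : ℝ) * CB δ * ((1-t)^δ * (t^(N0 δ - 1) * V)) := by
          apply mul_le_mul
          · exact mul_le_mul_of_nonneg_left hccb (Nat.cast_nonneg _)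
          · exact mul_le_mul_of_nonneg_left hJ hrpos.le
          · positivity
          · have := one_le_CB δ; positivity
    _ = (N0 δ : ℝ) * CB δ * (t^(N0 δ - 1) * ((1-t)^δ * V)) := by ring
    _ ≤ (N0 δ : ℝ) * CB δ * (t * ((1 + (1-t)^δ)/|δ|)) := by
          apply mul_le_mul_of_nonneg_left
          · apply mul_le_mul hpow hkey (by positivity) ht0.le
          · have := one_le_CB δ; positivity
    _ = Adom δ * (t * (1 + (1-t)^δ)) := by unfold Adom; field_simp
  
end KummerAux

namespace KummerAux

lemma RR_tendsto (δ : ℝ) (hδ : -1 < δ) {t : ℝ} (ht0 : 0 < t) (ht1 : t < 1) :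
    Tendsto (fun n => RR δ n t) atTop (nhds 0) := by
  have h1t : (0:ℝ) < 1 - t := by linarith
  set Mt : ℝ := max 1 ((1-t)^(-δ-1)) with hMt
  have hMtnn : 0 ≤ Mt := le_trans zero_le_one (le_max_left _ _)
  have key : ∀ n : ℕ, 1 ≤ n → |RR δ n t| ≤ (CB δ * ((1-t)^δ * Mt)) * t^n := by
    intro n hn
    have hJle : J δ n t ≤ Mt * (t^n / n) := by
      have hcont1 : ContinuousOn (fun s : ℝ => s^(n-1) * (1-s)^(-δ-1)) (Set.uIcc (0:ℝ) t) := by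
        apply ContinuousOn.mul (continuous_pow _).continuousOn
        apply ContinuousOn.rpow_const (continuous_const.sub continuous_id).continuousOn
        intro s hs
        rw [Set.uIcc_of_le ht0.le] at hs
        exact Or.inl (by simp only [Pi.sub_apply, id_eq]; nlinarith [hs.2, ht1])
      have hi1 : IntervalIntegrable (fun s : ℝ => s^(n-1) * (1-s)^(-δ-1)) volume 0 t :=
        hcont1.intervalIntegrable
      have hi2 : IntervalIntegrable (fun s : ℝ => s^(n-1) * Mt) volume 0 t :=
        (((continuous_pow _).mul continuous_const).continuousOn).intervalIntegrable
      have hmono := intervalIntegral.integral_mono_on (μ := volume) ht0.le hi1 hi2 ?_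
      · refine le_trans hmono ?_
        have : (∫ s in (0:ℝ)..t, s^(n-1) * Mt) = (∫ s in (0:ℝ)..t, s^(n-1)) * Mt :=
          intervalIntegral.integral_mul_const _ _
        rw [this, integral_pow]
        have hn1 : (n-1) + 1 = n := by omega
        rw [hn1]
        rw [zero_pow (by omega : n ≠ 0)]
        have hc : ((n-1:ℕ):ℝ) + 1 = (n:ℝ) := by exact_mod_cast congrArg (Nat.cast : ℕ → ℝ) hn1
        rw [sub_zero, hc]
        exact le_of_eq (by ring)
      · intro s hs
        apply mul_le_mul_of_nonneg_left ?_ (pow_nonneg hs.1 _)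
        rw [hMt]
        rcases le_or_gt (-δ-1) 0 with hexp | hexp
        · refine le_max_of_le_right ?_
          exact Real.rpow_le_rpow_of_nonpos h1t (by linarith [hs.2]) hexp
        · refine le_max_of_le_left ?_
          exact Real.rpow_le_one (by linarith [hs.2]) (by linarith [hs.2, ht0.le]) hexp.le
    have hJnn := J_nonneg δ n ht0.le ht1
    have hrpos : (0:ℝ) < (1-t)^δ := Real.rpow_pos_of_pos h1t δ
    have hccb := abs_cc_le δ hδ n
    rw [RR_eq δ hn ht0.le ht1]
    have hnnR : (0:ℝ) < (n:ℝ) := by exact_mod_cast hn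
    rw [abs_mul, abs_mul, abs_mul, abs_of_nonneg hrpos.le, abs_of_nonneg hJnn,
      abs_of_nonneg hnnR.le]
    calc (n:ℝ) * |cc δ n| * ((1-t)^δ * J δ n t)
        ≤ (n:ℝ) * CB δ * ((1-t)^δ * (Mt * (t^n / n))) := by
          apply mul_le_mul
          · exact mul_le_mul_of_nonneg_left hccb hnnR.le
          · exact mul_le_mul_of_nonneg_left hJle hrpos.le
          · positivity
          · have := one_le_CB δ; positivity
    _ = (CB δ * ((1-t)^δ * Mt)) * t^n := by field_simp
  have hlim : Tendsto (fun n : ℕ => (CB δ * ((1-t)^δ * Mt)) * t^n) atTop (nhds 0) := by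
    have := (tendsto_pow_atTop_nhds_zero_of_lt_one ht0.le ht1).const_mul (CB δ * ((1-t)^δ * Mt))
    simpa using this
  apply squeeze_zero_norm' ?_ hlim
  filter_upwards [eventually_ge_atTop 1] with n hn
  exact key n hn

end KummerAux

namespace KummerAux

open Set

lemma rpow_base_bound {m b q : ℝ} (hm : 0 < m) (hmb : m ≤ b) (hb1 : b ≤ 1) :
    b^q ≤ max 1 (m^q) := by
  rcases le_or_gt 0 q with hq | hq
  · exact le_max_of_le_left (Real.rpow_le_one (by linarith) hb1 hq)
  · exact le_max_of_le_right (Real.rpow_le_rpow_of_nonpos hm hmb hq.le)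

lemma cont_rpow_on_Ioo (p : ℝ) : ContinuousOn (fun t : ℝ => t^p) (Ioo (0:ℝ) 1) := by
  apply ContinuousOn.rpow_const continuousOn_id
  intro t ht
  exact Or.inl (ne_of_gt ht.1)

lemma cont_one_sub_rpow_on (q : ℝ) {s : Set ℝ} (hs : ∀ t ∈ s, t < 1) :
    ContinuousOn (fun t : ℝ => (1-t)^q) s := by
  apply ContinuousOn.rpow_const (continuous_const.sub continuous_id).continuousOn
  intro t ht
  exact Or.inl (by have := hs t ht; simp only [Pi.sub_apply, id_eq]; intro h; nlinarith)

lemma integrableOn_one_sub_rpow {q : ℝ} (hq : -1 < q) (a b : ℝ) :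
    IntegrableOn (fun t : ℝ => (1-t)^q) (Ioo a b) := by
  have h := (intervalIntegral.intervalIntegrable_rpow' hq (a := 1-b) (b := 1-a)).comp_sub_left 1
  simp only [sub_sub_cancel] at h
  replace h := h.symm
  rcases le_or_gt a b with hab | hab
  · rw [intervalIntegrable_iff_integrableOn_Ioo_of_le hab] at h
    exact h
  · rw [Set.Ioo_eq_empty (by linarith)]
    simp [IntegrableOn]

lemma integrableOn_beta {p q : ℝ} (hp : -1 < p) (hq : -1 < q) :
    IntegrableOn (fun t : ℝ => t^p * (1-t)^q) (Ioo (0:ℝ) 1) := by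
  have h1 : IntegrableOn (fun t : ℝ => t^p * (1-t)^q) (Ioo (0:ℝ) (2/3)) := by
    have hint : IntegrableOn (fun t : ℝ => t^p) (Ioo (0:ℝ) (2/3)) :=
      (intervalIntegral.integrableOn_Ioo_rpow_iff (by norm_num)).mpr hp
    apply Integrable.mono' (hint.const_mul (max 1 ((1/3:ℝ)^q)))
    · apply ContinuousOn.aestronglyMeasurable _ measurableSet_Ioo
      exact (cont_rpow_on_Ioo p |>.mono (by intro x hx; exact ⟨hx.1, by linarith [hx.2]⟩)).mul
        (cont_one_sub_rpow_on q (fun t ht => by linarith [ht.2]))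
    · rw [ae_restrict_iff' measurableSet_Ioo]
      filter_upwards with t ht
      have ht0 := ht.1
      have ht1 := ht.2
      rw [Real.norm_eq_abs, abs_mul, abs_of_nonneg (Real.rpow_nonneg ht0.le p),
        abs_of_nonneg (Real.rpow_nonneg (by linarith) q)]
      rw [mul_comm (max 1 ((1/3:ℝ)^q))]
      apply mul_le_mul_of_nonneg_left _ (Real.rpow_nonneg ht0.le p)
      exact rpow_base_bound (by norm_num) (by linarith) (by linarith)
  have h2 : IntegrableOn (fun t : ℝ => t^p * (1-t)^q) (Ioo (1/3:ℝ) 1) := by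
    have hint : IntegrableOn (fun t : ℝ => (1-t)^q) (Ioo (1/3:ℝ) 1) :=
      integrableOn_one_sub_rpow hq _ _
    apply Integrable.mono' (hint.const_mul (max 1 ((1/3:ℝ)^p)))
    · apply ContinuousOn.aestronglyMeasurable _ measurableSet_Ioo
      exact ((cont_rpow_on_Ioo p).mono (by intro x hx; exact ⟨by linarith [hx.1], hx.2⟩)).mul
        (cont_one_sub_rpow_on q (fun t ht => ht.2))
    · rw [ae_restrict_iff' measurableSet_Ioo]
      filter_upwards with t ht
      have ht0 := ht.1
      have ht1 := ht.2
      rw [Real.norm_eq_abs, abs_mul, abs_of_nonneg (Real.rpow_nonneg (by linarith) p),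
        abs_of_nonneg (Real.rpow_nonneg (by linarith) q)]
      rw [mul_comm (max 1 ((1/3:ℝ)^p))]
      rw [mul_comm (t^p)]
      apply mul_le_mul_of_nonneg_left _ (Real.rpow_nonneg (by linarith) q)
      exact rpow_base_bound (by norm_num) (by linarith) (by linarith)
  apply IntegrableOn.mono_set (h1.union h2)
  intro t ht
  rcases lt_or_ge t (2/3) with h | h
  · exact Or.inl ⟨ht.1, h⟩
  · exact Or.inr ⟨by linarith, ht.2⟩

end KummerAux

namespace KummerAux

open Set

lemma RR_continuousOn (δ : ℝ) (n : ℕ) : ContinuousOn (fun t => RR δ n t) (Ioo (0:ℝ) 1) := by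
  unfold RR PP
  apply ContinuousOn.sub (cont_one_sub_rpow_on δ (fun t ht => ht.2))
  apply continuousOn_finset_sum
  intro k _
  exact (continuous_const.mul (continuous_pow k)).continuousOn

lemma I_tendsto (α δ σ : ℝ) (hα : 0 < α) (hδ : -1 < δ) (hσ₁ : 0 ≤ σ) (hσ₂ : σ ≤ α) :
    Tendsto (fun n => ∫ t in Ioo (0:ℝ) 1, t^(α-σ-1) * |RR δ n t|) atTop (nhds 0) := by
  rw [← tendsto_add_atTop_iff_nat (N0 δ)]
  have hbound_int : IntegrableOn (fun t : ℝ => Adom δ * (1 + (1-t)^δ)) (Ioo (0:ℝ) 1) := by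
    apply Integrable.const_mul
    exact (integrableOn_const (by simp)).add (integrableOn_one_sub_rpow hδ 0 1)
  have hmeas : ∀ n : ℕ, AEStronglyMeasurable
      (fun t : ℝ => t^(α-σ-1) * |RR δ (n + N0 δ) t|) (volume.restrict (Ioo (0:ℝ) 1)) := by
    intro n
    apply ContinuousOn.aestronglyMeasurable _ measurableSet_Ioo
    exact (cont_rpow_on_Ioo _).mul (RR_continuousOn δ _).abs
  have h := MeasureTheory.tendsto_integral_of_dominated_convergence
    (μ := volume.restrict (Ioo (0:ℝ) 1))
    (F := fun n (t : ℝ) => t^(α-σ-1) * |RR δ (n + N0 δ) t|) (f := fun _ => 0)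
    (bound := fun t : ℝ => Adom δ * (1 + (1-t)^δ)) hmeas hbound_int ?_ ?_
  · simpa using h
  · intro n
    rw [ae_restrict_iff' measurableSet_Ioo]
    filter_upwards with t ht
    have ht0 := ht.1
    have ht1 := ht.2
    have hb := RR_dominated δ hδ (Nat.le_add_left (N0 δ) n) ht0 ht1
    have hr1 : (0:ℝ) ≤ t^(α-σ-1) := Real.rpow_nonneg ht0.le _
    rw [Real.norm_eq_abs, abs_mul, abs_of_nonneg hr1, abs_abs]
    calc t^(α-σ-1) * |RR δ (n + N0 δ) t|
        ≤ t^(α-σ-1) * (Adom δ * (t * (1 + (1-t)^δ))) := mul_le_mul_of_nonneg_left hb hr1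
    _ = Adom δ * (t^(α-σ-1) * t) * (1 + (1-t)^δ) := by ring
    _ = Adom δ * t^(α-σ) * (1 + (1-t)^δ) := by
        rw [← Real.rpow_add_one (ne_of_gt ht0)]
        norm_num
    _ ≤ Adom δ * 1 * (1 + (1-t)^δ) := by
        have h1 : t^(α-σ) ≤ 1 := Real.rpow_le_one ht0.le ht1.le (by linarith)
        have h2 : (0:ℝ) ≤ 1 + (1-t)^δ := by
          have := Real.rpow_nonneg (by linarith : (0:ℝ) ≤ 1-t) δ
          linarith
        apply mul_le_mul_of_nonneg_right _ h2
        exact mul_le_mul_of_nonneg_left h1 (Adom_nonneg δ)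
    _ = Adom δ * (1 + (1-t)^δ) := by ring
  · rw [ae_restrict_iff' measurableSet_Ioo]
    filter_upwards with t ht
    have hRt : Tendsto (fun n => RR δ (n + N0 δ) t) atTop (nhds 0) :=
      (RR_tendsto δ hδ ht.1 ht.2).comp (tendsto_add_atTop_nat (N0 δ))
    have := (hRt.abs.const_mul (t^(α-σ-1)))
    simpa using this

lemma exists_Csigma (σ : ℝ) (hσ : 0 ≤ σ) :
    ∃ C : ℝ, 0 ≤ C ∧ ∀ y : ℝ, 0 ≤ y → y^σ * Real.exp (-y) ≤ C := by
  set m : ℕ := ⌈σ⌉₊ + 1 with hm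
  refine ⟨1 + (m:ℝ)^m, by positivity, ?_⟩
  intro y hy
  have hexp1 : Real.exp (-y) ≤ 1 := Real.exp_le_one_iff.mpr (by linarith)
  rcases le_or_gt y 1 with h1 | h1
  · have h2 : y^σ ≤ 1 := Real.rpow_le_one hy h1 hσ
    have h3 : (0:ℝ) < Real.exp (-y) := Real.exp_pos _
    nlinarith [pow_nonneg (Nat.cast_nonneg m : (0:ℝ) ≤ m) m]
  · have hσm : σ ≤ (m:ℝ) := by
      have := Nat.le_ceil σ
      rw [hm]
      push_cast
      linarith
    have h2 : y^σ ≤ y^(m:ℝ) := Real.rpow_le_rpow_of_exponent_le h1.le hσm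
    rw [Real.rpow_natCast] at h2
    have hmpos : (0:ℝ) < (m:ℝ) := by rw [hm]; positivity
    have h4 : y / m ≤ Real.exp (y/m) := by linarith [Real.add_one_le_exp (y/m)]
    have h5 : (y/m)^m ≤ (Real.exp (y/m))^m :=
      pow_le_pow_left₀ (by positivity) h4 m
    rw [← Real.exp_nat_mul] at h5
    have h6 : (m:ℝ) * (y/m) = y := by field_simp
    rw [h6, div_pow] at h5
    have h7 : y^m ≤ (m:ℝ)^m * Real.exp y := by
      rw [div_le_iff₀ (by positivity)] at h5
      linarith [h5]
    have h8 : Real.exp y * Real.exp (-y) = 1 := by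
      rw [← Real.exp_add]; simp
    have h9 : (0:ℝ) < Real.exp (-y) := Real.exp_pos _
    have h10 : y^σ * Real.exp (-y) ≤ ((m:ℝ)^m * Real.exp y) * Real.exp (-y) := by
      apply mul_le_mul_of_nonneg_right (le_trans h2 h7) h9.le
    rw [mul_assoc, h8, mul_one] at h10
    linarith

end KummerAux

namespace KummerAux

open Set

lemma lincGamma_div_eq (ν : ℝ) (hν : 0 < ν) {x : ℝ} (hx : 0 < x) :
    lincGamma ν x / x^ν = ∫ t in (0:ℝ)..1, t^(ν-1) * Real.exp (-(x*t)) := by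
  have h := intervalIntegral.smul_integral_comp_mul_left
    (f := fun s => s^(ν-1) * Real.exp (-s)) (a := 0) (b := 1) x
  simp only [mul_zero, mul_one, smul_eq_mul] at h
  have hcongr : ∀ t ∈ Set.uIcc (0:ℝ) 1,
      (x*t)^(ν-1) * Real.exp (-(x*t)) = x^(ν-1) * (t^(ν-1) * Real.exp (-(x*t))) := by
    intro t ht
    rw [Set.uIcc_of_le zero_le_one] at ht
    rw [Real.mul_rpow hx.le ht.1]
    ring
  rw [intervalIntegral.integral_congr hcongr, intervalIntegral.integral_const_mul] at h
  have hlg : lincGamma ν x = x * (x^(ν-1) * ∫ t in (0:ℝ)..1, t^(ν-1) * Real.exp (-(x*t))) := by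
    rw [lincGamma, ← h]
  have hxν : x^ν = x^(ν-1) * x := by
    rw [← Real.rpow_add_one hx.ne']
    norm_num
  rw [hlg, hxν]
  have h1 : x^(ν-1) ≠ 0 := ne_of_gt (Real.rpow_pos_of_pos hx _)
  field_simp

lemma integrable_pow_exp {p : ℝ} (x : ℝ) (hp : -1 < p) (hx : 0 ≤ x) :
    IntegrableOn (fun t : ℝ => t^p * Real.exp (-(x*t))) (Ioo (0:ℝ) 1) := by
  apply Integrable.mono' ((intervalIntegral.integrableOn_Ioo_rpow_iff one_pos).mpr hp)
  · apply ContinuousOn.aestronglyMeasurable _ measurableSet_Ioo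
    exact (cont_rpow_on_Ioo p).mul (Real.continuous_exp.comp (continuous_const.mul continuous_id).neg).continuousOn
  · rw [ae_restrict_iff' measurableSet_Ioo]
    filter_upwards with t ht
    have he : Real.exp (-(x*t)) ≤ 1 := Real.exp_le_one_iff.mpr (by nlinarith [ht.1])
    rw [Real.norm_eq_abs, abs_mul, abs_of_nonneg (Real.rpow_nonneg ht.1.le p),
      abs_of_nonneg (Real.exp_nonneg _)]
    nlinarith [Real.rpow_nonneg ht.1.le p, Real.exp_nonneg (-(x*t))]

lemma integrable_kummer (α δ : ℝ) (hα : 0 < α) (hδ : -1 < δ) {x : ℝ} (hx : 0 ≤ x) :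
    IntegrableOn (fun t : ℝ => t^(α-1) * (1-t)^δ * Real.exp (-(x*t))) (Ioo (0:ℝ) 1) := by
  apply Integrable.mono' (integrableOn_beta (by linarith : (-1:ℝ) < α-1) hδ)
  · apply ContinuousOn.aestronglyMeasurable _ measurableSet_Ioo
    exact ((cont_rpow_on_Ioo _).mul (cont_one_sub_rpow_on δ (fun t ht => ht.2))).mul
      (Real.continuous_exp.comp (continuous_const.mul continuous_id).neg).continuousOn
  · rw [ae_restrict_iff' measurableSet_Ioo]
    filter_upwards with t ht
    have he : Real.exp (-(x*t)) ≤ 1 := Real.exp_le_one_iff.mpr (by nlinarith [ht.1])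
    have h1 : (0:ℝ) ≤ t^(α-1) := Real.rpow_nonneg ht.1.le _
    have h2 : (0:ℝ) ≤ (1-t)^δ := Real.rpow_nonneg (by linarith [ht.2]) _
    rw [Real.norm_eq_abs, abs_mul, abs_mul, abs_of_nonneg h1, abs_of_nonneg h2,
      abs_of_nonneg (Real.exp_nonneg _)]
    nlinarith [Real.exp_nonneg (-(x*t)), mul_nonneg h1 h2]

lemma main_identity (α δ : ℝ) (hα : 0 < α) (hδ : -1 < δ) {x : ℝ} (hx : 0 < x) (n : ℕ) :
    NKummer α δ x - ∑ k ∈ Finset.range n, cc δ k * (lincGamma (α+k) x / x^(α+(k:ℝ)))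
      = ∫ t in Ioo (0:ℝ) 1, t^(α-1) * RR δ n t * Real.exp (-(x*t)) := by
  have hNK : NKummer α δ x
      = ∫ t in Ioo (0:ℝ) 1, t^(α-1) * (1-t)^δ * Real.exp (-(x*t)) := by
    rw [NKummer, intervalIntegral.integral_of_le zero_le_one, integral_Ioc_eq_integral_Ioo]
  have hterm : ∀ k : ℕ, lincGamma (α+k) x / x^(α+(k:ℝ))
      = ∫ t in Ioo (0:ℝ) 1, t^(α+(k:ℝ)-1) * Real.exp (-(x*t)) := by
    intro k
    rw [lincGamma_div_eq (α+k) (by positivity) hx,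
      intervalIntegral.integral_of_le zero_le_one, integral_Ioc_eq_integral_Ioo]
  have hintk : ∀ k : ℕ, IntegrableOn
      (fun t : ℝ => cc δ k * (t^(α+(k:ℝ)-1) * Real.exp (-(x*t)))) (Ioo (0:ℝ) 1) := by
    intro k
    exact (integrable_pow_exp x (by have : (0:ℝ) ≤ (k:ℝ) := Nat.cast_nonneg k; linarith : (-1:ℝ) < α+(k:ℝ)-1) hx.le).const_mul _
  have hsum : ∑ k ∈ Finset.range n, cc δ k * (lincGamma (α+k) x / x^(α+(k:ℝ)))
      = ∫ t in Ioo (0:ℝ) 1, ∑ k ∈ Finset.range n,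
          cc δ k * (t^(α+(k:ℝ)-1) * Real.exp (-(x*t))) := by
    rw [MeasureTheory.integral_finset_sum _ (fun k _ => hintk k)]
    apply Finset.sum_congr rfl
    intro k _
    rw [MeasureTheory.integral_const_mul, ← hterm k]
  rw [hNK, hsum, ← MeasureTheory.integral_sub (integrable_kummer α δ hα hδ hx.le)
    (MeasureTheory.integrable_finset_sum _ (fun k _ => hintk k))]
  apply MeasureTheory.setIntegral_congr_fun measurableSet_Ioo
  intro t ht
  have ht0 := ht.1
  have hpow : ∀ k : ℕ, t^(α+(k:ℝ)-1) = t^(α-1) * t^k := by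
    intro k
    rw [show α+(k:ℝ)-1 = (α-1) + (k:ℝ) by ring, Real.rpow_add ht0, Real.rpow_natCast]
  simp only
  calc t^(α-1) * (1-t)^δ * Real.exp (-(x*t))
        - ∑ k ∈ Finset.range n, cc δ k * (t^(α+(k:ℝ)-1) * Real.exp (-(x*t)))
      = t^(α-1) * (1-t)^δ * Real.exp (-(x*t))
        - ∑ k ∈ Finset.range n, (cc δ k * t^k) * (t^(α-1) * Real.exp (-(x*t))) := by
        congr 1
        apply Finset.sum_congr rfl
        intro k _
        rw [hpow k]
        ring
  _ = t^(α-1) * ((1-t)^δ - ∑ k ∈ Finset.range n, cc δ k * t^k) * Real.exp (-(x*t)) := by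
        rw [← Finset.sum_mul]
        ring
  _ = t^(α-1) * RR δ n t * Real.exp (-(x*t)) := by unfold RR PP; rfl

end KummerAux

namespace KummerAux

open Set

lemma integrable_F (α δ σ : ℝ) (hα : 0 < α) (hδ : -1 < δ) (hσ₁ : 0 ≤ σ) (hσ₂ : σ ≤ α)
    {n : ℕ} (hn : N0 δ ≤ n) :
    IntegrableOn (fun t : ℝ => t^(α-σ-1) * |RR δ n t|) (Ioo (0:ℝ) 1) := by
  have hbound_int : IntegrableOn (fun t : ℝ => Adom δ * (1 + (1-t)^δ)) (Ioo (0:ℝ) 1) := by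
    apply Integrable.const_mul
    exact (integrableOn_const (by simp)).add (integrableOn_one_sub_rpow hδ 0 1)
  apply Integrable.mono' hbound_int
  · apply ContinuousOn.aestronglyMeasurable _ measurableSet_Ioo
    exact (cont_rpow_on_Ioo _).mul (RR_continuousOn δ _).abs
  · rw [ae_restrict_iff' measurableSet_Ioo]
    filter_upwards with t ht
    have ht0 := ht.1
    have ht1 := ht.2
    have hb := RR_dominated δ hδ hn ht0 ht1
    have hr1 : (0:ℝ) ≤ t^(α-σ-1) := Real.rpow_nonneg ht0.le _
    rw [Real.norm_eq_abs, abs_mul, abs_of_nonneg hr1, abs_abs]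
    calc t^(α-σ-1) * |RR δ n t|
        ≤ t^(α-σ-1) * (Adom δ * (t * (1 + (1-t)^δ))) := mul_le_mul_of_nonneg_left hb hr1
    _ = Adom δ * (t^(α-σ-1) * t) * (1 + (1-t)^δ) := by ring
    _ = Adom δ * t^(α-σ) * (1 + (1-t)^δ) := by
        rw [← Real.rpow_add_one (ne_of_gt ht0)]; norm_num
    _ ≤ Adom δ * 1 * (1 + (1-t)^δ) := by
        have h1 : t^(α-σ) ≤ 1 := Real.rpow_le_one ht0.le ht1.le (by linarith)
        have h2 : (0:ℝ) ≤ 1 + (1-t)^δ := by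
          have := Real.rpow_nonneg (by linarith : (0:ℝ) ≤ 1-t) δ
          linarith
        apply mul_le_mul_of_nonneg_right _ h2
        exact mul_le_mul_of_nonneg_left h1 (Adom_nonneg δ)
    _ = Adom δ * (1 + (1-t)^δ) := by ring

lemma integrable_fRR (α δ : ℝ) (hα : 0 < α) (hδ : -1 < δ) {x : ℝ} (hx : 0 < x)
    {n : ℕ} (hn : N0 δ ≤ n) :
    IntegrableOn (fun t : ℝ => t^(α-1) * RR δ n t * Real.exp (-(x*t))) (Ioo (0:ℝ) 1) := by
  have hbound_int : IntegrableOn (fun t : ℝ => Adom δ * (1 + (1-t)^δ)) (Ioo (0:ℝ) 1) := by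
    apply Integrable.const_mul
    exact (integrableOn_const (by simp)).add (integrableOn_one_sub_rpow hδ 0 1)
  apply Integrable.mono' hbound_int
  · apply ContinuousOn.aestronglyMeasurable _ measurableSet_Ioo
    exact ((cont_rpow_on_Ioo _).mul (RR_continuousOn δ _)).mul
      (Real.continuous_exp.comp (continuous_const.mul continuous_id).neg).continuousOn
  · rw [ae_restrict_iff' measurableSet_Ioo]
    filter_upwards with t ht
    have ht0 := ht.1
    have ht1 := ht.2
    have hb := RR_dominated δ hδ hn ht0 ht1
    have hr1 : (0:ℝ) ≤ t^(α-1) := Real.rpow_nonneg ht0.le _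
    have he : Real.exp (-(x*t)) ≤ 1 := Real.exp_le_one_iff.mpr (by nlinarith)
    have he0 : (0:ℝ) ≤ Real.exp (-(x*t)) := Real.exp_nonneg _
    rw [Real.norm_eq_abs, abs_mul, abs_mul, abs_of_nonneg hr1, abs_of_nonneg he0]
    calc t^(α-1) * |RR δ n t| * Real.exp (-(x*t)) ≤ t^(α-1) * |RR δ n t| * 1 := by
          apply mul_le_mul_of_nonneg_left he (by positivity)
    _ = t^(α-1) * |RR δ n t| := by ring
    _ ≤ t^(α-1) * (Adom δ * (t * (1 + (1-t)^δ))) := mul_le_mul_of_nonneg_left hb hr1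
    _ = Adom δ * (t^(α-1) * t) * (1 + (1-t)^δ) := by ring
    _ = Adom δ * t^α * (1 + (1-t)^δ) := by
        rw [← Real.rpow_add_one (ne_of_gt ht0)]; norm_num
    _ ≤ Adom δ * 1 * (1 + (1-t)^δ) := by
        have h1 : t^α ≤ 1 := Real.rpow_le_one ht0.le ht1.le (by linarith)
        have h2 : (0:ℝ) ≤ 1 + (1-t)^δ := by
          have := Real.rpow_nonneg (by linarith : (0:ℝ) ≤ 1-t) δ
          linarith
        apply mul_le_mul_of_nonneg_right _ h2
        exact mul_le_mul_of_nonneg_left h1 (Adom_nonneg δ)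
    _ = Adom δ * (1 + (1-t)^δ) := by ring

end KummerAux

theorem kummer_gamma_series_uniform_convergence
    (α : ℝ) (hα : 0 < α) (δ : ℝ) (hδ : -1 < δ) (σ : ℝ) (hσ₁ : 0 ≤ σ) (hσ₂ : σ ≤ α) :
    Filter.Tendsto
      (fun n : ℕ => sSup ((fun x : ℝ => x ^ σ *
          |NKummer α δ x - ∑ k ∈ Finset.range n,
            poch (-δ) k / (k.factorial : ℝ) * (lincGamma (α + k) x / x ^ (α + (k:ℝ)))|)
        '' Set.Ioi 0))
      Filter.atTop (nhds 0) := by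
  classical
  open KummerAux Set in
  obtain ⟨Cσ, hCσ0, hCσ⟩ := exists_Csigma σ hσ₁
  set I : ℕ → ℝ := fun n => ∫ t in Ioo (0:ℝ) 1, t^(α-σ-1) * |RR δ n t| with hIdef
  have hI : Tendsto I atTop (nhds 0) := I_tendsto α δ σ hα hδ hσ₁ hσ₂
  have hInn : ∀ n, 0 ≤ I n := by
    intro n
    apply MeasureTheory.setIntegral_nonneg measurableSet_Ioo
    intro t ht
    have ht0 := ht.1
    positivity
  have key : ∀ n : ℕ, N0 δ ≤ n → ∀ x : ℝ, 0 < x →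
      x ^ σ * |NKummer α δ x - ∑ k ∈ Finset.range n,
        poch (-δ) k / (k.factorial : ℝ) * (lincGamma (α + k) x / x ^ (α + (k:ℝ)))|
      ≤ Cσ * I n := by
    intro n hn x hx
    have hsumeq : (∑ k ∈ Finset.range n,
        poch (-δ) k / (k.factorial : ℝ) * (lincGamma (α + k) x / x ^ (α + (k:ℝ))))
        = ∑ k ∈ Finset.range n, cc δ k * (lincGamma (α + k) x / x ^ (α + (k:ℝ))) := rfl
    rw [hsumeq, main_identity α δ hα hδ hx n]
    have hxσ : (0:ℝ) ≤ x^σ := Real.rpow_nonneg hx.le σ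
    have hfint := integrable_fRR α δ hα hδ hx hn
    have hFint := integrable_F α δ σ hα hδ hσ₁ hσ₂ hn
    calc x^σ * |∫ t in Ioo (0:ℝ) 1, t^(α-1) * RR δ n t * Real.exp (-(x*t))|
        ≤ x^σ * ∫ t in Ioo (0:ℝ) 1, |t^(α-1) * RR δ n t * Real.exp (-(x*t))| := by
          apply mul_le_mul_of_nonneg_left _ hxσ
          exact MeasureTheory.norm_integral_le_integral_norm
            (μ := volume.restrict (Ioo (0:ℝ) 1))
            (fun t : ℝ => t^(α-1) * RR δ n t * Real.exp (-(x*t)))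
    _ = ∫ t in Ioo (0:ℝ) 1, x^σ * |t^(α-1) * RR δ n t * Real.exp (-(x*t))| :=
          (MeasureTheory.integral_const_mul _ _).symm
    _ ≤ ∫ t in Ioo (0:ℝ) 1, Cσ * (t^(α-σ-1) * |RR δ n t|) := by
          apply MeasureTheory.setIntegral_mono_on (hfint.abs.const_mul _)
            (hFint.const_mul _) measurableSet_Ioo
          intro t ht
          have ht0 := ht.1
          have ht1 := ht.2
          have htσ : (0:ℝ) < t^σ := Real.rpow_pos_of_pos ht0 σ
          have hxe : x^σ * Real.exp (-(x*t)) ≤ Cσ / t^σ := by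
            have h1 := hCσ (x*t) (by positivity)
            rw [Real.mul_rpow hx.le ht0.le] at h1
            rw [div_eq_mul_inv, ← mul_le_mul_iff_of_pos_right htσ]
            calc x^σ * Real.exp (-(x*t)) * t^σ = x^σ * t^σ * Real.exp (-(x*t)) := by ring
            _ ≤ Cσ := h1
            _ = Cσ * (t^σ)⁻¹ * t^σ := by field_simp
          have habs : |t^(α-1) * RR δ n t * Real.exp (-(x*t))|
              = t^(α-1) * |RR δ n t| * Real.exp (-(x*t)) := by
            rw [abs_mul, abs_mul, abs_of_nonneg (Real.rpow_nonneg ht0.le _),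
              abs_of_nonneg (Real.exp_nonneg _)]
          rw [habs]
          calc x^σ * (t^(α-1) * |RR δ n t| * Real.exp (-(x*t)))
              = (t^(α-1) * |RR δ n t|) * (x^σ * Real.exp (-(x*t))) := by ring
          _ ≤ (t^(α-1) * |RR δ n t|) * (Cσ / t^σ) := by
              apply mul_le_mul_of_nonneg_left hxe (by positivity)
          _ = Cσ * ((t^(α-1) / t^σ) * |RR δ n t|) := by ring
          _ = Cσ * (t^(α-σ-1) * |RR δ n t|) := by
              rw [← Real.rpow_sub ht0]
              ring_nf
    _ = Cσ * I n := MeasureTheory.integral_const_mul _ _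
  apply squeeze_zero' (f := fun n => sSup _)
  · filter_upwards with n
    apply Real.sSup_nonneg
    rintro y ⟨x, hx, rfl⟩
    have : (0:ℝ) < x := hx
    positivity
  · filter_upwards [eventually_ge_atTop (N0 δ)] with n hn
    apply Real.sSup_le
    · rintro y ⟨x, hx, rfl⟩
      exact key n hn x hx
    · exact mul_nonneg hCσ0 (hInn n)
  · simpa using hI.const_mul Cσ
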